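/- Branching bisimilarity, defined as the union of all branching bisimulations, is itself a branching bisimulation. -/
import Mathlib


/-- `x ⟹ x'`: a (possibly empty) sequence of `τ`-steps from `x` to `x'`. -/
def TauStar {X A : Type} (tr : X → A → X → Prop) (τ : A) : X → X → Prop :=
  Relation.ReflTransGen (fun u v => tr u τ v)

/-- `x →(α) x'`: either `x →α x'`, or `α = τ` and `x = x'`. -/
def TrOpt {X A : Type} (tr : X → A → X → Prop) (τ : A) (x : X) (α : A) (x' : X) : Prop :=
  tr x α x' ∨ (α = τ ∧ x = x')

/-- A symmetric relation `R` is a branching bisimulation. -/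
def IsBranchingBisim {X A : Type} (tr : X → A → X → Prop) (τ : A)
    (R : X → X → Prop) : Prop :=
  Symmetric R ∧ ∀ x y, R x y → ∀ α x', tr x α x' →
    ∃ y' y'', TauStar tr τ y y' ∧ TrOpt tr τ y' α y'' ∧ R x y' ∧ R x' y''

/-- Branching bisimilarity: the union of all branching bisimulations. -/
def BranchingBisimilar {X A : Type} (tr : X → A → X → Prop) (τ : A) (x y : X) : Prop :=
  ∃ R, IsBranchingBisim tr τ R ∧ R x y

/-- A symmetric relation `R` is a branching apartness relation. -/
def IsBranchingApartnessRel {X A : Type} (tr : X → A → X → Prop) (τ : A)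
    (R : X → X → Prop) : Prop :=
  Symmetric R ∧ ∀ x y α x', tr x α x' →
    (∀ y' y'', TauStar tr τ y y' → TrOpt tr τ y' α y'' → (R x y' ∨ R x' y'')) →
    R x y

/-- Branching apartness: the intersection of all branching apartness relations. -/
def BranchingApart {X A : Type} (tr : X → A → X → Prop) (τ : A) (x y : X) : Prop :=
  ∀ R, IsBranchingApartnessRel tr τ R → R x y

/-- Branching bisimilarity is itself a branching bisimulation. -/
theorem branchingBisimilar_isBranchingBisim {X A : Type}
    (tr : X → A → X → Prop) (τ : A) :
    IsBranchingBisim tr τ (BranchingBisimilar tr τ) := by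
  constructor
  · intro x y ⟨R, hR, hxy⟩
    exact ⟨R, hR, hR.1 hxy⟩
  · rintro x y ⟨R, hR, hxy⟩ α x' hstep
    obtain ⟨y', y'', h1, h2, h3, h4⟩ := hR.2 x y hxy α x' hstep
    exact ⟨y', y'', h1, h2, ⟨R, hR, h3⟩, ⟨R, hR, h4⟩⟩
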